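/- Let q be a connected query graph with n ≥ 1 vertices and let G be a data graph. Then the number of matches of q in G satisfies |ℝ_G(q)| ≤ |V_G| · D_G^{n−1}, where D_G is the maximum degree of G. -/

import Mathlib

/-- A query graph on a vertex type `α`: a simple graph given as a subgraph of the
complete graph, carrying its own vertex set `verts`. -/
abbrev QGraph (α : Type*) := SimpleGraph.Subgraph (⊤ : SimpleGraph α)

/-- A match of `q` in `G`, given as a function on the vertex set of `q`: an
injective map sending every edge of `q` to an edge of `G`. -/
def IsMatchOn {α β : Type*} (q : QGraph α) (G : SimpleGraph β)
    (f : q.verts → β) : Prop :=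
  Function.Injective f ∧ ∀ v w : q.verts, q.Adj v w → G.Adj (f v) (f w)

/-- For a connected query graph `q` with `n ≥ 1` vertices and a data graph `G`,
the number of matches of `q` in `G` is at most `|V_G| · D_G^(n-1)`, where `D_G`
is the maximum degree of `G`. -/
theorem stmt_13 {α β : Type*} [Fintype β] (q : QGraph α) (hconn : q.Connected)
    (n : ℕ) (hn : 1 ≤ n) (hcard : Nat.card q.verts = n)
    (G : SimpleGraph β) [DecidableRel G.Adj] :
    Nat.card {f : q.verts → β // IsMatchOn q G f} ≤
      Fintype.card β * G.maxDegree ^ (n - 1) := by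
  classical
  have hfin : Finite q.verts := by
    have : 0 < Nat.card q.verts := hcard ▸ hn
    exact (Nat.card_pos_iff.mp this).2
  haveI := Fintype.ofFinite q.verts
  set H : SimpleGraph q.verts := q.coe with hH
  have hHconn : H.Connected := hconn
  obtain ⟨r⟩ := hHconn.nonempty
  -- predecessor function toward root r
  have hpred : ∀ v : q.verts, v ≠ r → ∃ w, H.Adj v w ∧ H.dist w r < H.dist v r := by
    intro v hv
    obtain ⟨p, hp⟩ := (hHconn v r).exists_walk_length_eq_dist
    have hd : H.dist v r ≠ 0 := by
      simpa using (hHconn.dist_eq_zero_iff.not.mpr hv)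
    cases p with
    | nil => simp [SimpleGraph.Walk.length_nil] at hp; exact absurd rfl hv
    | cons h pq =>
      refine ⟨_, h, ?_⟩
      have h1 : pq.length + 1 = H.dist v r := by simpa using hp
      have h2 : H.dist _ r ≤ pq.length := SimpleGraph.dist_le pq
      omega
  choose pred hpredAdj hpredDist using hpred
  -- embeddings of neighbor sets into Fin maxDegree
  have hemb : ∀ b : β, Nonempty (G.neighborSet b ↪ Fin G.maxDegree) := by
    intro b
    apply Function.Embedding.nonempty_of_card_le
    rw [G.card_neighborSet_eq_degree, Fintype.card_fin]
    exact G.degree_le_maxDegree b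
  let e : ∀ b : β, G.neighborSet b ↪ Fin G.maxDegree := fun b => (hemb b).some
  -- encoding map
  set S := {v : q.verts // v ≠ r} with hS
  have key : ∀ (f : {f : q.verts → β // IsMatchOn q G f}) (v : S),
      G.Adj (f.1 (pred v.1 v.2)) (f.1 v.1) := by
    rintro ⟨f, hf⟩ ⟨v, hv⟩
    exact (hf.2 _ _ ((q.coe_adj _ _).mp (hpredAdj v hv))).symm
  let Φ : {f : q.verts → β // IsMatchOn q G f} → β × (S → Fin G.maxDegree) :=
    fun f => (f.1 r, fun v => e (f.1 (pred v.1 v.2)) ⟨f.1 v.1, key f v⟩)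
  have hΦ : Function.Injective Φ := by
    intro f g h
    obtain ⟨h1, h2⟩ := Prod.mk.injEq .. ▸ h
    ext v
    -- strong induction on dist v r
    have main : ∀ k, ∀ v : q.verts, H.dist v r ≤ k → f.1 v = g.1 v := by
      intro k
      induction k with
      | zero =>
        intro v hv
        have : v = r := hHconn.dist_eq_zero_iff.mp (Nat.le_zero.mp hv)
        rw [this]; exact h1
      | succ k ih =>
        intro v hv
        by_cases hvr : v = r
        · rw [hvr]; exact h1
        · have hpp : f.1 (pred v hvr) = g.1 (pred v hvr) := by
            apply ih
            have := hpredDist v hvr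
            omega
          have htr : ∀ (a b : β) (hab : a = b) (x : G.neighborSet a)
              (hx : (x : β) ∈ G.neighborSet b), e a x = e b ⟨x.1, hx⟩ := by
            rintro a b rfl x hx; rfl
          have hthis := congrFun h2 ⟨v, hvr⟩
          simp only at hthis
          have hx : f.1 v ∈ G.neighborSet (g.1 (pred v hvr)) := hpp ▸ key f ⟨v, hvr⟩
          have hfinal : e (g.1 (pred v hvr)) ⟨f.1 v, hx⟩
              = e (g.1 (pred v hvr)) ⟨g.1 v, key g ⟨v, hvr⟩⟩ :=
            (htr _ _ hpp ⟨f.1 v, key f ⟨v, hvr⟩⟩ hx).symm.trans hthis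
          exact Subtype.ext_iff.mp ((e (g.1 (pred v hvr))).injective hfinal)
    exact main (H.dist v r) v le_rfl
  calc Nat.card {f : q.verts → β // IsMatchOn q G f}
      ≤ Nat.card (β × (S → Fin G.maxDegree)) := Nat.card_le_card_of_injective Φ hΦ
    _ = Fintype.card β * G.maxDegree ^ (n - 1) := by
        rw [Nat.card_eq_fintype_card, Fintype.card_prod, Fintype.card_fun,
          Fintype.card_fin]
        congr 2
        have : Fintype.card S = Fintype.card q.verts - 1 := by
          simpa [hS] using Set.card_ne_eq r (α := q.verts)
        rw [this, ← hcard, Nat.card_eq_fintype_card]
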